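/- If G is a 4-connected graph of order n at least 8 that has no forest cut, and u is a vertex of G of degree 5, then not all neighbors of u have degree 4. -/

import Mathlib

open SimpleGraph Walk


section helpers
variable {W : Type*} {H : SimpleGraph W}

lemma support_get_aux : ∀ {u v : W} (p : H.Walk u v) (n : ℕ), n ≤ p.length →
    p.support[n]? = some (p.getVert n) := by
  intro u v p
  induction p with
  | nil =>
    intro n hn
    have : n = 0 := by simpa using hn
    subst this; simp
  | cons h q ih =>
    intro n hn
    cases n with
    | zero => simp [Walk.support_cons, Walk.getVert_zero]
    | succ m =>
      have hm : m ≤ q.length := by simp [Walk.length_cons] at hn; omega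
      rw [Walk.support_cons]
      simpa [Walk.getVert_cons_succ] using ih m hm

lemma tail_get_aux {u v : W} (p : H.Walk u v) (n : ℕ) (hn : n < p.length) :
    p.support.tail[n]? = some (p.getVert (n+1)) := by
  have h := support_get_aux p (n+1) (by omega)
  rw [p.support_eq_cons] at h
  simpa using h

lemma cycle_start_nbrs {t : W} {c : H.Walk t t} (hc : c.IsCycle) :
    ∃ p q, p ∈ c.support ∧ q ∈ c.support ∧ p ≠ q ∧ H.Adj t p ∧ H.Adj t q := by
  have hl : 3 ≤ c.length := hc.three_le_length
  have hnn : ¬ c.Nil := Walk.not_nil_iff_lt_length.mpr (by omega)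
  have hnr : ¬ c.reverse.Nil := Walk.not_nil_iff_lt_length.mpr (by rw [Walk.length_reverse]; omega)
  have adj1 : H.Adj t (c.getVert 1) := Walk.adj_snd hnn
  have adj2' : H.Adj t (c.reverse.getVert 1) := Walk.adj_snd hnr
  rw [Walk.getVert_reverse] at adj2'
  refine ⟨c.getVert 1, c.getVert (c.length - 1), ?_, ?_, ?_, adj1, adj2'⟩
  · exact Walk.mem_support_iff_exists_getVert.mpr ⟨1, rfl, by omega⟩
  · exact Walk.mem_support_iff_exists_getVert.mpr ⟨c.length - 1, rfl, by omega⟩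
  · intro heq
    have h0 := tail_get_aux c 0 (by omega)
    have h1 := tail_get_aux c (c.length - 2) (by omega)
    have hnd : c.support.tail.Nodup := hc.2
    have hlen : c.support.tail.length = c.length := by
      have := Walk.length_support c; simp [List.length_tail, this]
    have : (0 : ℕ) = c.length - 2 := by
      refine (List.getElem?_inj (by omega) hnd).mp ?_
      rw [h0, h1]
      have he : c.length - 2 + 1 = c.length - 1 := by omega
      rw [he, heq]
    omega

lemma mem_tail_of_mem_support {a x : W} {d : H.Walk a a} (hd : ¬ d.Nil) (hx : x ∈ d.support) :
    x ∈ d.support.tail := by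
  rw [d.support_eq_cons] at hx
  rcases List.mem_cons.mp hx with rfl | h
  · have hlen : 0 < d.length := Walk.not_nil_iff_lt_length.mp hd
    have h1 := tail_get_aux d (d.length - 1) (by omega)
    have he : d.length - 1 + 1 = d.length := by omega
    rw [he, Walk.getVert_length] at h1
    rw [List.getElem?_eq_some_iff] at h1
    obtain ⟨hh1, hh2⟩ := h1
    have hm := List.getElem_mem hh1
    rwa [hh2] at hm
  · exact h

lemma cycle_nbrs [DecidableEq W] {v : W} {c : H.Walk v v} (hc : c.IsCycle) {t : W} (ht : t ∈ c.support) :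
    ∃ p q, p ∈ c.support ∧ q ∈ c.support ∧ p ≠ q ∧ H.Adj t p ∧ H.Adj t q := by
  have hc' := hc.rotate ht
  obtain ⟨p, q, hp, hq, hpq, a1, a2⟩ := cycle_start_nbrs hc'
  have hperm := Walk.support_rotate c t ht
  have hmem : ∀ x, x ∈ (c.rotate t ht).support → x ∈ c.support := by
    intro x hx
    have hnn : ¬ (c.rotate t ht).Nil :=
      Walk.not_nil_iff_lt_length.mpr (by have := hc'.three_le_length; omega)
    have h1 : x ∈ (c.rotate t ht).support.tail := mem_tail_of_mem_support hnn hx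
    have h2 : x ∈ c.support.tail := (hperm.mem_iff).mp h1
    rw [c.support_eq_cons]; exact List.mem_cons_of_mem _ h2
  exact ⟨p, q, hmem p hp, hmem q hq, hpq, a1, a2⟩

end helpers

/-- `S` is a vertex cut of `G`: some two vertices outside of `S` lie in
different connected components of `G - S`. -/
def IsVertexCut {V : Type*} (G : SimpleGraph V) (S : Set V) : Prop :=
  ∃ a b : ↥(Sᶜ), ¬ (G.induce Sᶜ).Reachable a b

/-- A forest cut is a vertex cut whose induced subgraph is a forest. -/
def IsForestCut {V : Type*} (G : SimpleGraph V) (S : Set V) : Prop :=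
  IsVertexCut G S ∧ (G.induce S).IsAcyclic

/-- A graph is `k`-connected if it has more than `k` vertices and deleting any set of
fewer than `k` vertices leaves a connected graph. -/
def KConnected {V : Type*} [Fintype V] (k : ℕ) (G : SimpleGraph V) : Prop :=
  k < Fintype.card V ∧ ∀ S : Finset V, S.card < k → (G.induce (↑S : Set V)ᶜ).Connected

section helpers2
variable {V : Type*} (G : SimpleGraph V)

lemma ACY2 [DecidableEq V] (S : Set V)
    (h : ∀ T : Set V, T ⊆ S →
      (∀ t, t ∈ T → ∃ P Q, P ∈ T ∧ Q ∈ T ∧ P ≠ Q ∧ G.Adj t P ∧ G.Adj t Q) →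
      ∀ x y z, x ∈ T → y ∈ T → z ∈ T → x ≠ y → x ≠ z → y ≠ z → False) :
    (G.induce S).IsAcyclic := by
  intro v c hc
  set T : Set V := {x | ∃ t : ↥S, t ∈ c.support ∧ (t : V) = x} with hTdef
  have hTS : T ⊆ S := by rintro x ⟨t, _, rfl⟩; exact t.2
  have hdeg : ∀ t, t ∈ T → ∃ P Q, P ∈ T ∧ Q ∈ T ∧ P ≠ Q ∧ G.Adj t P ∧ G.Adj t Q := by
    rintro x ⟨t, ht, rfl⟩
    obtain ⟨P, Q, hP, hQ, hPQ, h1, h2⟩ := cycle_nbrs hc ht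
    exact ⟨P.1, Q.1, ⟨P, hP, rfl⟩, ⟨Q, hQ, rfl⟩, fun hh => hPQ (Subtype.ext hh), h1, h2⟩
  obtain ⟨P, Q, hP, hQ, hPQ, h1, h2⟩ := cycle_start_nbrs hc
  have g1 : G.Adj v.1 P.1 := h1
  have g2 : G.Adj v.1 Q.1 := h2
  exact h T hTS hdeg v.1 P.1 Q.1 ⟨v, c.start_mem_support, rfl⟩ ⟨P, hP, rfl⟩ ⟨Q, hQ, rfl⟩
    g1.ne g2.ne (fun hh => hPQ (Subtype.ext hh))

lemma mk_cut (S A : Set V) (a b : V)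
    (haA : a ∈ A) (haS : a ∉ S) (hbS : b ∉ S) (hbA : b ∉ A)
    (hcl : ∀ x, x ∈ A → ∀ y, G.Adj x y → y ∈ A ∨ y ∈ S) :
    IsVertexCut G S := by
  refine ⟨⟨a, haS⟩, ⟨b, hbS⟩, fun hr => hbA ?_⟩
  have key : ∀ (x y : ↥(Sᶜ)), (G.induce Sᶜ).Walk x y → x.1 ∈ A → y.1 ∈ A := by
    intro x y w
    induction w with
    | nil => exact id
    | @cons x' y' z' hadj p ih =>
      intro hx
      apply ih
      have hGadj : G.Adj x'.1 y'.1 := hadj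
      rcases hcl _ hx _ hGadj with h | h
      · exact h
      · exact absurd h y'.2
  obtain ⟨w⟩ := hr
  exact key _ _ w haA

end helpers2

section
variable {V : Type*} [DecidableEq V]

lemma cardle2 (a b : V) : ({a,b} : Finset V).card ≤ 2 :=
  (Finset.card_insert_le _ _).trans (by simp)
lemma cardle3 (a b c : V) : ({a,b,c} : Finset V).card ≤ 3 :=
  (Finset.card_insert_le _ _).trans (Nat.add_le_add_right (cardle2 b c) 1)
lemma cardle4 (a b c d : V) : ({a,b,c,d} : Finset V).card ≤ 4 :=
  (Finset.card_insert_le _ _).trans (Nat.add_le_add_right (cardle3 b c d) 1)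
lemma cardle5 (a b c d e : V) : ({a,b,c,d,e} : Finset V).card ≤ 5 :=
  (Finset.card_insert_le _ _).trans (Nat.add_le_add_right (cardle4 b c d e) 1)
lemma cardle6 (a b c d e f : V) : ({a,b,c,d,e,f} : Finset V).card ≤ 6 :=
  (Finset.card_insert_le _ _).trans (Nat.add_le_add_right (cardle5 b c d e f) 1)
lemma cardle7 (a b c d e f g : V) : ({a,b,c,d,e,f,g} : Finset V).card ≤ 7 :=
  (Finset.card_insert_le _ _).trans (Nat.add_le_add_right (cardle6 b c d e f g) 1)

lemma card4eq (a b c d : V) (hab : a ≠ b) (hac : a ≠ c) (had : a ≠ d)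
    (hbc : b ≠ c) (hbd : b ≠ d) (hcd : c ≠ d) : ({a,b,c,d} : Finset V).card = 4 := by
  rw [Finset.card_insert_of_notMem (by simp [hab, hac, had]),
      Finset.card_insert_of_notMem (by simp [hbc, hbd]),
      Finset.card_insert_of_notMem (by simp [hcd]), Finset.card_singleton]

lemma card5eq (a b c d e : V) (hab : a ≠ b) (hac : a ≠ c) (had : a ≠ d) (hae : a ≠ e)
    (hbc : b ≠ c) (hbd : b ≠ d) (hbe : b ≠ e) (hcd : c ≠ d) (hce : c ≠ e) (hde : d ≠ e) :
    ({a,b,c,d,e} : Finset V).card = 5 := by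
  rw [Finset.card_insert_of_notMem (by simp [hab, hac, had, hae]),
      card4eq b c d e hbc hbd hbe hcd hce hde]
end

set_option maxHeartbeats 8000000 in
theorem degree_five_vertex_has_neighbor_of_degree_ne_four
    {V : Type*} [Fintype V] [DecidableEq V] (G : SimpleGraph V) [DecidableRel G.Adj]
    (hconn : KConnected 4 G) (hn : 8 ≤ Fintype.card V)
    (hnf : ¬ ∃ S : Set V, IsForestCut G S)
    (u : V) (hu : G.degree u = 5) :
    ∃ v ∈ G.neighborFinset u, G.degree v ≠ 4 := by
  classical
  by_contra hcon
  push_neg at hcon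
  have hforest : ∀ S : Set V, IsVertexCut G S → ¬ (G.induce S).IsAcyclic :=
    fun S hc ha => hnf ⟨S, hc, ha⟩
  have hsmall : ∀ F : Finset V, F.card < 4 → ¬ IsVertexCut G (↑F : Set V) := by
    intro F hF hcut
    obtain ⟨a, b, hr⟩ := hcut
    exact hr ((hconn.2 F hF).preconnected a b)
  have hbig : ∀ F : Finset V, F.card ≤ 7 → ∃ z, z ∉ F := by
    intro F hF
    by_contra hz; push_neg at hz
    have h1 : Finset.univ ⊆ F := fun x _ => hz x
    have h2 := Finset.card_le_card h1
    simp only [Finset.card_univ] at h2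
    omega
  have hnbhd : ∀ x : V, G.degree x ≤ 6 → IsVertexCut G (↑(G.neighborFinset x) : Set V) := by
    intro x hx
    obtain ⟨z, hz⟩ := hbig (insert x (G.neighborFinset x))
      ((Finset.card_insert_le _ _).trans (by rw [G.card_neighborFinset_eq_degree x]; omega))
    simp only [Finset.mem_insert, not_or] at hz
    apply mk_cut G _ {x} x z
    · rfl
    · simp
    · simpa using hz.2
    · simpa using hz.1
    · intro x' hx' y hadj
      rcases hx' with rfl
      right
      simpa using hadj
  have mindeg : ∀ x, 4 ≤ G.degree x := by
    intro x; by_contra hx; push_neg at hx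
    exact hsmall (G.neighborFinset x) (by rw [G.card_neighborFinset_eq_degree x]; omega)
      (hnbhd x (by omega))
  have deg4iff : ∀ v a b c d : V, G.degree v = 4 → a ≠ b → a ≠ c → a ≠ d → b ≠ c → b ≠ d → c ≠ d →
      G.Adj v a → G.Adj v b → G.Adj v c → G.Adj v d →
      (∀ y, G.Adj v y ↔ (y = a ∨ y = b ∨ y = c ∨ y = d)) := by
    intro v a b c d hdeg hab hac had hbc hbd hcd h1 h2 h3 h4 y
    have hsub : ({a,b,c,d} : Finset V) ⊆ G.neighborFinset v := by
      intro t ht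
      simp only [Finset.mem_insert, Finset.mem_singleton] at ht
      rcases ht with rfl|rfl|rfl|rfl <;> simp [SimpleGraph.mem_neighborFinset, *]
    have heq : ({a,b,c,d} : Finset V) = G.neighborFinset v :=
      Finset.eq_of_subset_of_card_le hsub
        (by rw [card4eq a b c d hab hac had hbc hbd hcd, G.card_neighborFinset_eq_degree v, hdeg])
    constructor
    · intro h
      have hy : y ∈ G.neighborFinset v := (SimpleGraph.mem_neighborFinset G v _).mpr h
      rw [← heq] at hy
      simpa using hy
    · rintro (rfl|rfl|rfl|rfl) <;> assumption
  have ex4 : ∀ v a b c : V, G.degree v = 4 → ∃ w, G.Adj v w ∧ w ≠ a ∧ w ≠ b ∧ w ≠ c := by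
    intro v a b c hdeg
    by_contra hw; push_neg at hw
    have hsub : G.neighborFinset v ⊆ ({a,b,c} : Finset V) := by
      intro t ht
      have hadj := (SimpleGraph.mem_neighborFinset G v _).mp ht
      simp only [Finset.mem_insert, Finset.mem_singleton]
      by_cases h1 : t = a
      · exact Or.inl h1
      by_cases h2 : t = b
      · exact Or.inr (Or.inl h2)
      exact Or.inr (Or.inr (hw t hadj h1 h2))
    have hc := (Finset.card_le_card hsub).trans (cardle3 a b c)
    rw [G.card_neighborFinset_eq_degree v, hdeg] at hc
    omega

  -- notation and basic facts
  have hNuIff : ∀ y, y ∈ G.neighborFinset u ↔ G.Adj u y :=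
    fun y => SimpleGraph.mem_neighborFinset G u y
  have hUNu : u ∉ G.neighborFinset u := SimpleGraph.notMem_neighborFinset_self G u
  have hdeg4 : ∀ v, v ∈ G.neighborFinset u → G.degree v = 4 := hcon
  have hNucard : (G.neighborFinset u).card = 5 := hu
  have neU : ∀ x, x ∈ G.neighborFinset u → x ≠ u := fun x hx h => hUNu (h ▸ hx)
  have exNu : ∀ a b c d : V, ∃ z, z ∈ G.neighborFinset u ∧ z ≠ a ∧ z ≠ b ∧ z ≠ c ∧ z ≠ d := by
    intro a b c d
    by_contra h; push_neg at h
    have hsub : G.neighborFinset u ⊆ ({a,b,c,d} : Finset V) := by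
      intro t ht
      simp only [Finset.mem_insert, Finset.mem_singleton]
      by_cases h1 : t = a
      · exact Or.inl h1
      by_cases h2 : t = b
      · exact Or.inr (Or.inl h2)
      by_cases h3 : t = c
      · exact Or.inr (Or.inr (Or.inl h3))
      exact Or.inr (Or.inr (Or.inr (h t ht h1 h2 h3)))
    have hc := (Finset.card_le_card hsub).trans (cardle4 a b c d)
    omega
  by_cases hB : ∃ b, b ∈ G.neighborFinset u ∧ ∀ y, G.Adj b y → y = u ∨ y ∈ G.neighborFinset u
  · -- CASE 2 : some neighbor of u has all its neighbors in N[u]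
    obtain ⟨b1, hb1Nu, hb1cl⟩ := hB
    have hb1deg : G.degree b1 = 4 := hdeg4 b1 hb1Nu
    have hadjb1u : G.Adj b1 u := ((hNuIff b1).mp hb1Nu).symm
    obtain ⟨p, hp, hpu, -, -⟩ := ex4 b1 u u u hb1deg
    obtain ⟨q, hq, hqu, hqp, -⟩ := ex4 b1 u p p hb1deg
    obtain ⟨r, hr, hru, hrp, hrq⟩ := ex4 b1 u p q hb1deg
    have hpNu : p ∈ G.neighborFinset u := (hb1cl p hp).resolve_left hpu
    have hqNu : q ∈ G.neighborFinset u := (hb1cl q hq).resolve_left hqu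
    have hrNu : r ∈ G.neighborFinset u := (hb1cl r hr).resolve_left hru
    have hb1iff : ∀ y, G.Adj b1 y ↔ (y = u ∨ y = p ∨ y = q ∨ y = r) :=
      deg4iff b1 u p q r hb1deg (Ne.symm hpu) (Ne.symm hqu) (Ne.symm hru)
        (Ne.symm hqp) (Ne.symm hrp) (Ne.symm hrq) hadjb1u hp hq hr
    -- there is an edge among p, q, r
    have hedge : G.Adj p q ∨ G.Adj p r ∨ G.Adj q r := by
      by_contra hno; push_neg at hno
      obtain ⟨hno1, hno2, hno3⟩ := hno
      apply hforest _ (hnbhd b1 (by omega))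
      apply ACY2
      intro T hTS hdeg x y z hx hy hz hxy hxz hyz
      have hmemS : ∀ t, t ∈ T → t = u ∨ t = p ∨ t = q ∨ t = r := by
        intro t ht
        exact (hb1iff t).mp ((SimpleGraph.mem_neighborFinset G b1 t).mp (Finset.mem_coe.mp (hTS ht)))
      have noedge : ∀ s t : V, (s = p ∨ s = q ∨ s = r) → (t = p ∨ t = q ∨ t = r) →
          G.Adj s t → False := by
        intro s t hs ht hk
        rcases hs with rfl|rfl|rfl <;> rcases ht with rfl|rfl|rfl
        exacts [hk.ne rfl, hno1 hk, hno2 hk, hno1 hk.symm, hk.ne rfl, hno3 hk,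
          hno2 hk.symm, hno3 hk.symm, hk.ne rfl]
      have hmem : ∀ t, t ∈ T → t = u := by
        intro t ht
        rcases hmemS t ht with h | htm
        · exact h
        · exfalso
          obtain ⟨B1, B2, hB1, hB2, hB12, k1, k2⟩ := hdeg t ht
          have e : ∀ B, B ∈ T → G.Adj t B → B = u := by
            intro B hBT hk
            rcases hmemS B hBT with h | hB
            · exact h
            · exact absurd hk (fun hk' => noedge t B htm hB hk')
          exact hB12 ((e B1 hB1 k1).trans (e B2 hB2 k2).symm)
      exact hxy ((hmem x hx).trans (hmem y hy).symm)
    -- the main argument of case 2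
    have main : ∀ x2 x3 x4 : V, x2 ∈ G.neighborFinset u → x3 ∈ G.neighborFinset u →
        x4 ∈ G.neighborFinset u → x2 ≠ x3 → x2 ≠ x4 → x3 ≠ x4 →
        (∀ y, G.Adj b1 y ↔ (y = u ∨ y = x2 ∨ y = x3 ∨ y = x4)) →
        G.Adj x2 x3 → False := by
      clear hb1iff hedge hp hq hr hpu hqu hru hqp hrp hrq hpNu hqNu hrNu
      intro x2 x3 x4 h2Nu h3Nu h4Nu h23 h24 h34 hiffb1 hA23
      have hb1x2 : b1 ≠ x2 := ((hiffb1 x2).mpr (by tauto)).ne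
      have hb1x3 : b1 ≠ x3 := ((hiffb1 x3).mpr (by tauto)).ne
      have hb1x4 : b1 ≠ x4 := ((hiffb1 x4).mpr (by tauto)).ne
      have hadj2u : G.Adj x2 u := ((hNuIff x2).mp h2Nu).symm
      have hadj3u : G.Adj x3 u := ((hNuIff x3).mp h3Nu).symm
      have hadj4u : G.Adj x4 u := ((hNuIff x4).mp h4Nu).symm
      have hadjb12 : G.Adj b1 x2 := (hiffb1 x2).mpr (by tauto)
      have hadjb13 : G.Adj b1 x3 := (hiffb1 x3).mpr (by tauto)
      have hadjb14 : G.Adj b1 x4 := (hiffb1 x4).mpr (by tauto)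
      have hb1u : b1 ≠ u := neU b1 hb1Nu
      have h2u : x2 ≠ u := neU x2 h2Nu
      have h3u : x3 ≠ u := neU x3 h3Nu
      have h4u : x4 ≠ u := neU x4 h4Nu
      obtain ⟨x5, h5Nu, h5b1, h52, h53, h54⟩ := exNu b1 x2 x3 x4
      have h5u : x5 ≠ u := neU x5 h5Nu
      have hNuEq : ∀ t, t ∈ G.neighborFinset u → t = b1 ∨ t = x2 ∨ t = x3 ∨ t = x4 ∨ t = x5 := by
        intro t ht
        have hsub : ({b1, x2, x3, x4, x5} : Finset V) ⊆ G.neighborFinset u := by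
          intro s hs
          simp only [Finset.mem_insert, Finset.mem_singleton] at hs
          rcases hs with rfl|rfl|rfl|rfl|rfl <;> assumption
        have heq : ({b1, x2, x3, x4, x5} : Finset V) = G.neighborFinset u :=
          Finset.eq_of_subset_of_card_le hsub
            (by rw [card5eq b1 x2 x3 x4 x5 hb1x2 hb1x3 hb1x4 (Ne.symm h5b1) h23 h24
                (Ne.symm h52) h34 (Ne.symm h53) (Ne.symm h54)]; omega)
        rw [← heq] at ht
        simpa using ht
      -- x2 and x4 are not adjacent, nor are x3 and x4
      have not24 : ¬ G.Adj x2 x4 := by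
        intro h24adj
        have h2iff := deg4iff x2 u b1 x3 x4 (hdeg4 x2 h2Nu) (Ne.symm hb1u) (Ne.symm h3u)
          (Ne.symm h4u) hb1x3 hb1x4 h34 hadj2u hadjb12.symm hA23 h24adj
        obtain ⟨z, hz⟩ := hbig {u, x3, x4, b1, x2, x5} ((cardle6 _ _ _ _ _ _).trans (by norm_num))
        simp only [Finset.mem_insert, Finset.mem_singleton, not_or] at hz
        obtain ⟨hz1, hz2, hz3, hz4, hz5, hz6⟩ := hz
        refine hsmall {u, x3, x4} (lt_of_le_of_lt (cardle3 _ _ _) (by norm_num))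
          (mk_cut G _ {b1, x2} b1 z ?_ ?_ ?_ ?_ ?_)
        · simp
        · simp [hb1u, hb1x3, hb1x4]
        · simp [hz1, hz2, hz3]
        · simp [hz4, hz5]
        · intro t ht y hadj
          simp only [Set.mem_insert_iff, Set.mem_singleton_iff] at ht
          rcases ht with rfl | rfl
          · rcases (hiffb1 y).mp hadj with rfl|rfl|rfl|rfl <;> simp
          · rcases (h2iff y).mp hadj with rfl|rfl|rfl|rfl <;> simp
      have not34 : ¬ G.Adj x3 x4 := by
        intro h34adj
        have h3iff := deg4iff x3 u b1 x2 x4 (hdeg4 x3 h3Nu) (Ne.symm hb1u) (Ne.symm h2u)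
          (Ne.symm h4u) hb1x2 hb1x4 h24 hadj3u hadjb13.symm hA23.symm h34adj
        obtain ⟨z, hz⟩ := hbig {u, x2, x4, b1, x3, x5} ((cardle6 _ _ _ _ _ _).trans (by norm_num))
        simp only [Finset.mem_insert, Finset.mem_singleton, not_or] at hz
        obtain ⟨hz1, hz2, hz3, hz4, hz5, hz6⟩ := hz
        refine hsmall {u, x2, x4} (lt_of_le_of_lt (cardle3 _ _ _) (by norm_num))
          (mk_cut G _ {b1, x3} b1 z ?_ ?_ ?_ ?_ ?_)
        · simp
        · simp [hb1u, hb1x2, hb1x4]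
        · simp [hz1, hz2, hz3]
        · simp [hz4, hz5]
        · intro t ht y hadj
          simp only [Set.mem_insert_iff, Set.mem_singleton_iff] at ht
          rcases ht with rfl | rfl
          · rcases (hiffb1 y).mp hadj with rfl|rfl|rfl|rfl <;> simp
          · rcases (h3iff y).mp hadj with rfl|rfl|rfl|rfl <;> simp
      obtain ⟨s2, hs2, hs2u, hs2b1, hs2x3⟩ := ex4 x2 u b1 x3 (hdeg4 x2 h2Nu)
      have hs2x4 : s2 ≠ x4 := fun h => not24 (h ▸ hs2)
      have hs2x2 : s2 ≠ x2 := hs2.ne'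
      obtain ⟨s3, hs3, hs3u, hs3b1, hs3x2⟩ := ex4 x3 u b1 x2 (hdeg4 x3 h3Nu)
      have hs3x4 : s3 ≠ x4 := fun h => not34 (h ▸ hs3)
      have hs3x3 : s3 ≠ x3 := hs3.ne'
      have h2iff := deg4iff x2 u b1 x3 s2 (hdeg4 x2 h2Nu) (Ne.symm hb1u) (Ne.symm h3u)
        (Ne.symm hs2u) hb1x3 (Ne.symm hs2b1) (Ne.symm hs2x3) hadj2u hadjb12.symm hA23 hs2
      have h3iff := deg4iff x3 u b1 x2 s3 (hdeg4 x3 h3Nu) (Ne.symm hb1u) (Ne.symm h2u)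
        (Ne.symm hs3u) hb1x2 (Ne.symm hs3b1) (Ne.symm hs3x2) hadj3u hadjb13.symm hA23.symm hs3
      -- sub-case lemma for (s2 = x5 and s3 outside)
      have sub22 : ∀ A2 A3 w3 : V, A2 ∈ G.neighborFinset u → A3 ∈ G.neighborFinset u →
          A2 ≠ A3 → A2 ≠ x4 → A3 ≠ x4 → A2 ≠ x5 → A3 ≠ x5 → A2 ≠ b1 → A3 ≠ b1 →
          w3 ∉ G.neighborFinset u → w3 ≠ u →
          (∀ t, t ∈ G.neighborFinset u → t = b1 ∨ t = A2 ∨ t = A3 ∨ t = x4 ∨ t = x5) →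
          (∀ y, G.Adj b1 y ↔ (y = u ∨ y = A2 ∨ y = A3 ∨ y = x4)) →
          (∀ y, G.Adj A2 y ↔ (y = u ∨ y = b1 ∨ y = A3 ∨ y = x5)) →
          (∀ y, G.Adj A3 y ↔ (y = u ∨ y = b1 ∨ y = A2 ∨ y = w3)) →
          ¬ G.Adj A2 x4 → ¬ G.Adj A3 x4 → False := by
        clear not24 not34 h2iff h3iff hs2 hs2u hs2b1 hs2x3 hs2x4 hs2x2 hs3 hs3u hs3b1 hs3x2
          hs3x4 hs3x3 hA23 h23 h24 h34 h2Nu h3Nu hadj2u hadj3u hadjb12 hadjb13 h2u h3u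
          hb1x2 hb1x3 hNuEq h52 h53
        intro A2 A3 w3 hA2Nu hA3Nu hA23' hA24 hA34 hA25 hA35 hA2b1 hA3b1 hw3Nu hw3u hNuEq'
          hiffb1' hiffA2 hiffA3 hnA24 hnA34
        have hA2u : A2 ≠ u := neU A2 hA2Nu
        have hA3u : A3 ≠ u := neU A3 hA3Nu
        have hadjb1A2 : G.Adj b1 A2 := (hiffb1' A2).mpr (by tauto)
        have hadjb1A3 : G.Adj b1 A3 := (hiffb1' A3).mpr (by tauto)
        have hadjb14' : G.Adj b1 x4 := (hiffb1' x4).mpr (by tauto)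
        have hadjA23 : G.Adj A2 A3 := (hiffA2 A3).mpr (by tauto)
        have hadjA25 : G.Adj A2 x5 := (hiffA2 x5).mpr (by tauto)
        have hadjA3w3 : G.Adj A3 w3 := (hiffA3 w3).mpr (by tauto)
        have hw3A2 : w3 ≠ A2 := fun h => hw3Nu (h ▸ hA2Nu)
        have hw3A3 : w3 ≠ A3 := hadjA3w3.ne'
        have hw3b1 : w3 ≠ b1 := fun h => hw3Nu (h ▸ hb1Nu)
        have hw3x4 : w3 ≠ x4 := fun h => hw3Nu (h ▸ h4Nu)
        have hw3x5 : w3 ≠ x5 := fun h => hw3Nu (h ▸ h5Nu)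
        have hnb1x5 : ¬ G.Adj b1 x5 := by
          intro h
          rcases (hiffb1' x5).mp h with h'|h'|h'|h'
          exacts [h5u h', absurd h'.symm hA25, absurd h'.symm hA35, absurd h'.symm (Ne.symm h54)]
        have hnA3x5 : ¬ G.Adj A3 x5 := by
          intro h
          rcases (hiffA3 x5).mp h with h'|h'|h'|h'
          exacts [h5u h', h5b1 h', hA25 h'.symm, hw3x5 h'.symm]

        -- x4 and x5 are adjacent
        have hadj45 : G.Adj x4 x5 := by
          by_contra h45
          obtain ⟨z, hz⟩ := hbig {u, A3, x4, x5, b1, A2} ((cardle6 _ _ _ _ _ _).trans (by norm_num))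
          simp only [Finset.mem_insert, Finset.mem_singleton, not_or] at hz
          obtain ⟨hz1, hz2, hz3, hz4, hz5, hz6⟩ := hz
          have hcut : IsVertexCut G ({u, A3, x4, x5} : Set V) := by
            refine mk_cut G _ {b1, A2} b1 z ?_ ?_ ?_ ?_ ?_
            · simp
            · simp [hb1u, Ne.symm hA3b1, hb1x4, Ne.symm h5b1]
            · simp [hz1, hz2, hz3, hz4]
            · simp [hz5, hz6]
            · intro t ht y hadj
              simp only [Set.mem_insert_iff, Set.mem_singleton_iff] at ht
              rcases ht with rfl | rfl
              · rcases (hiffb1' y).mp hadj with rfl|rfl|rfl|rfl <;> simp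
              · rcases (hiffA2 y).mp hadj with rfl|rfl|rfl|rfl <;> simp
          refine hforest _ hcut (ACY2 G _ ?_)
          intro T hTS hdeg x y z hx hy hz' hxy hxz hyz
          have hmemS : ∀ t, t ∈ T → t = u ∨ t = A3 ∨ t = x4 ∨ t = x5 := by
            intro t ht
            simpa only [Set.mem_insert_iff, Set.mem_singleton_iff] using hTS ht
          have hnadj : ∀ B, (B = A3 ∨ B = x4 ∨ B = x5) → ∀ C, G.Adj B C → C ∈ T → C = u := by
            intro B hB C hk hCT
            rcases hmemS C hCT with h | hC
            · exact h
            · exfalso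
              rcases hB with rfl|rfl|rfl <;> rcases hC with rfl|rfl|rfl
              exacts [hk.ne rfl, hnA34 hk, hnA3x5 hk, hnA34 hk.symm, hk.ne rfl, h45 hk,
                hnA3x5 hk.symm, h45 hk.symm, hk.ne rfl]
          have hmem : ∀ t, t ∈ T → t = u := by
            intro t ht
            rcases hmemS t ht with h | htm
            · exact h
            · exfalso
              obtain ⟨B1, B2, hB1, hB2, hB12, k1, k2⟩ := hdeg t ht
              exact hB12 ((hnadj t htm B1 k1 hB1).trans (hnadj t htm B2 k2 hB2).symm)
          exact hxy ((hmem x hx).trans (hmem y hy).symm)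
        obtain ⟨s4, hs4, hs4u, hs4b1, hs4x5⟩ := ex4 x4 u b1 x5 (hdeg4 x4 h4Nu)
        have hs4A2 : s4 ≠ A2 := fun h => hnA24 (by rw [← h]; exact hs4.symm)
        have hs4A3 : s4 ≠ A3 := fun h => hnA34 (by rw [← h]; exact hs4.symm)
        have hs4x4 : s4 ≠ x4 := hs4.ne'
        have hs4Nu : s4 ∉ G.neighborFinset u := by
          intro hmem4
          rcases hNuEq' s4 hmem4 with h|h|h|h|h
          exacts [hs4b1 h, hs4A2 h, hs4A3 h, hs4x4 h, hs4x5 h]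
        have h4iff := deg4iff x4 u b1 x5 s4 (hdeg4 x4 h4Nu) (Ne.symm hb1u) (Ne.symm h5u)
          (Ne.symm hs4u) (Ne.symm h5b1) (Ne.symm hs4b1) (Ne.symm hs4x5) hadj4u hadjb14'.symm
          hadj45 hs4
        obtain ⟨s5, hs5, hs5u, hs5A2, hs5x4⟩ := ex4 x5 u A2 x4 (hdeg4 x5 h5Nu)
        have hs5b1 : s5 ≠ b1 := fun h => hnb1x5 (by rw [← h]; exact hs5.symm)
        have hs5A3 : s5 ≠ A3 := fun h => hnA3x5 (by rw [← h]; exact hs5.symm)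
        have hs5x5 : s5 ≠ x5 := hs5.ne'
        have hs5Nu : s5 ∉ G.neighborFinset u := by
          intro hmem5
          rcases hNuEq' s5 hmem5 with h|h|h|h|h
          exacts [hs5b1 h, hs5A2 h, hs5A3 h, hs5x4 h, hs5x5 h]
        have h5iff := deg4iff x5 u A2 x4 s5 (hdeg4 x5 h5Nu) (Ne.symm hA2u) (Ne.symm h4u)
          (Ne.symm hs5u) hA24 (Ne.symm hs5A2) (Ne.symm hs5x4)
          ((hNuIff x5).mp h5Nu).symm hadjA25.symm hadj45.symm hs5
        have hw45 : s4 = s5 := by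
          by_contra hne45
          have hnb1s4 : ¬ G.Adj b1 s4 := by
            intro h
            rcases (hiffb1' s4).mp h with h'|h'|h'|h'
            exacts [hs4u h', hs4A2 h', hs4A3 h', hs4x4 h']
          have hnx5s4 : ¬ G.Adj x5 s4 := by
            intro h
            rcases (h5iff s4).mp h with h'|h'|h'|h'
            exacts [hs4u h', hs4A2 h', hs4x4 h', hne45 h']
          obtain ⟨z, hz⟩ := hbig {u, b1, x5, s4, x4, A2} ((cardle6 _ _ _ _ _ _).trans (by norm_num))
          simp only [Finset.mem_insert, Finset.mem_singleton, not_or] at hz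
          obtain ⟨hz1, hz2, hz3, hz4, hz5, hz6⟩ := hz
          have hcut : IsVertexCut G ({u, b1, x5, s4} : Set V) := by
            refine mk_cut G _ {x4} x4 z ?_ ?_ ?_ ?_ ?_
            · simp
            · simp [h4u, Ne.symm hb1x4, Ne.symm h54, Ne.symm hs4x4]
            · simp [hz1, hz2, hz3, hz4]
            · simp [hz5]
            · intro t ht y hadj
              simp only [Set.mem_singleton_iff] at ht
              subst ht
              rcases (h4iff y).mp hadj with rfl|rfl|rfl|rfl <;> simp
          refine hforest _ hcut (ACY2 G _ ?_)
          intro T hTS hdeg x y z hx hy hz' hxy hxz hyz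
          have hmemS : ∀ t, t ∈ T → t = u ∨ t = b1 ∨ t = x5 ∨ t = s4 := by
            intro t ht
            simpa only [Set.mem_insert_iff, Set.mem_singleton_iff] using hTS ht
          have hnadj : ∀ B, (B = b1 ∨ B = x5 ∨ B = s4) → ∀ C, G.Adj B C → C ∈ T → C = u := by
            intro B hB C hk hCT
            rcases hmemS C hCT with h | hC
            · exact h
            · exfalso
              rcases hB with rfl|rfl|rfl <;> rcases hC with rfl|rfl|rfl
              exacts [hk.ne rfl, hnb1x5 hk, hnb1s4 hk, hnb1x5 hk.symm, hk.ne rfl, hnx5s4 hk,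
                hnb1s4 hk.symm, hnx5s4 hk.symm, hk.ne rfl]
          have hmem : ∀ t, t ∈ T → t = u := by
            intro t ht
            rcases hmemS t ht with h | htm
            · exact h
            · exfalso
              obtain ⟨B1, B2, hB1, hB2, hB12, k1, k2⟩ := hdeg t ht
              exact hB12 ((hnadj t htm B1 k1 hB1).trans (hnadj t htm B2 k2 hB2).symm)
          exact hxy ((hmem x hx).trans (hmem y hy).symm)
        by_cases hw3s4 : w3 = s4
        · obtain ⟨z, hz⟩ := hbig {u, x5, s4, b1, A2, A3, x4} (cardle7 _ _ _ _ _ _ _)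
          simp only [Finset.mem_insert, Finset.mem_singleton, not_or] at hz
          obtain ⟨hz1, hz2, hz3, hz4, hz5, hz6, hz7⟩ := hz
          refine hsmall {u, x5, s4} (lt_of_le_of_lt (cardle3 _ _ _) (by norm_num))
            (mk_cut G _ {b1, A2, A3, x4} b1 z ?_ ?_ ?_ ?_ ?_)
          · simp
          · simp [hb1u, Ne.symm h5b1, Ne.symm hs4b1]
          · simp [hz1, hz2, hz3]
          · simp [hz4, hz5, hz6, hz7]
          · intro t ht y hadj
            simp only [Set.mem_insert_iff, Set.mem_singleton_iff] at ht
            rcases ht with rfl | rfl | rfl | rfl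
            · rcases (hiffb1' y).mp hadj with rfl|rfl|rfl|rfl <;> simp
            · rcases (hiffA2 y).mp hadj with rfl|rfl|rfl|rfl <;> simp
            · rcases (hiffA3 y).mp hadj with rfl|rfl|rfl|rfl <;> simp [hw3s4]
            · rcases (h4iff y).mp hadj with rfl|rfl|rfl|rfl <;> simp
        · by_cases hz8 : ∃ z, z ∉ ({u, b1, A2, A3, x4, x5, w3, s4} : Finset V)
          · obtain ⟨z, hz⟩ := hz8
            simp only [Finset.mem_insert, Finset.mem_singleton, not_or] at hz
            obtain ⟨hz1, hz2, hz3, hz4, hz5, hz6, hz7, hz8'⟩ := hz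
            have hcut : IsVertexCut G ({u, x5, w3, s4} : Set V) := by
              refine mk_cut G _ {b1, A2, A3, x4} b1 z ?_ ?_ ?_ ?_ ?_
              · simp
              · simp [hb1u, Ne.symm h5b1, Ne.symm hw3b1, Ne.symm hs4b1]
              · simp [hz1, hz6, hz7, hz8']
              · simp [hz2, hz3, hz4, hz5]
              · intro t ht y hadj
                simp only [Set.mem_insert_iff, Set.mem_singleton_iff] at ht
                rcases ht with rfl | rfl | rfl | rfl
                · rcases (hiffb1' y).mp hadj with rfl|rfl|rfl|rfl <;> simp
                · rcases (hiffA2 y).mp hadj with rfl|rfl|rfl|rfl <;> simp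
                · rcases (hiffA3 y).mp hadj with rfl|rfl|rfl|rfl <;> simp
                · rcases (h4iff y).mp hadj with rfl|rfl|rfl|rfl <;> simp
            refine hforest _ hcut (ACY2 G _ ?_)
            intro T hTS hdeg x y z hx hy hz' hxy hxz hyz
            have hmemS : ∀ t, t ∈ T → t = u ∨ t = x5 ∨ t = w3 ∨ t = s4 := by
              intro t ht
              simpa only [Set.mem_insert_iff, Set.mem_singleton_iff] using hTS ht
            have hw3T : w3 ∉ T := by
              intro hT
              obtain ⟨B1, B2, hB1, hB2, hB12, k1, k2⟩ := hdeg w3 hT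
              have e : ∀ B, B ∈ T → G.Adj w3 B → B = s4 := by
                intro B hBT hk
                rcases hmemS B hBT with h|h|h|h
                · exfalso; rw [h] at hk; exact hw3Nu ((hNuIff w3).mpr hk.symm)
                · exfalso; rw [h] at hk
                  rcases (h5iff w3).mp hk.symm with h'|h'|h'|h'
                  exacts [hw3u h', hw3A2 h', hw3x4 h', hw3s4 (h'.trans hw45.symm)]
                · exfalso; rw [h] at hk; exact hk.ne rfl
                · exact h
              exact hB12 ((e B1 hB1 k1).trans (e B2 hB2 k2).symm)
            have huT : u ∉ T := by
              intro hT
              obtain ⟨B1, B2, hB1, hB2, hB12, k1, k2⟩ := hdeg u hT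
              have e : ∀ B, B ∈ T → G.Adj u B → B = x5 := by
                intro B hBT hk
                rcases hmemS B hBT with h|h|h|h
                · exfalso; rw [h] at hk; exact hk.ne rfl
                · exact h
                · exfalso; rw [h] at hk; exact hw3Nu ((hNuIff w3).mpr hk)
                · exfalso; rw [h] at hk; exact hs4Nu ((hNuIff s4).mpr hk)
              exact hB12 ((e B1 hB1 k1).trans (e B2 hB2 k2).symm)
            have hmem : ∀ t, t ∈ T → t = x5 ∨ t = s4 := by
              intro t ht
              rcases hmemS t ht with h|h|h|h
              · exact absurd (h ▸ ht) huT
              · exact Or.inl h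
              · exact absurd (h ▸ ht) hw3T
              · exact Or.inr h
            rcases hmem x hx with h1|h1 <;> rcases hmem y hy with h2|h2 <;> rcases hmem z hz' with h3|h3
            exacts [hxy (h1.trans h2.symm), hxy (h1.trans h2.symm), hxz (h1.trans h3.symm),
              hyz (h2.trans h3.symm), hyz (h2.trans h3.symm), hxz (h1.trans h3.symm),
              hxy (h1.trans h2.symm), hxy (h1.trans h2.symm)]
          · push_neg at hz8
            have hsub : G.neighborFinset w3 ⊆ ({A3, s4} : Finset V) := by
              intro t ht
              have hadj : G.Adj w3 t := (SimpleGraph.mem_neighborFinset G w3 t).mp ht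
              have htF := hz8 t
              simp only [Finset.mem_insert, Finset.mem_singleton] at htF
              simp only [Finset.mem_insert, Finset.mem_singleton]
              rcases htF with rfl|rfl|rfl|rfl|rfl|rfl|rfl|rfl
              · exact absurd ((hNuIff w3).mpr hadj.symm) hw3Nu
              · exfalso
                rcases (hiffb1' w3).mp hadj.symm with h'|h'|h'|h'
                exacts [hw3u h', hw3A2 h', hw3A3 h', hw3x4 h']
              · exfalso
                rcases (hiffA2 w3).mp hadj.symm with h'|h'|h'|h'
                exacts [hw3u h', hw3b1 h', hw3A3 h', hw3x5 h']
              · exact Or.inl rfl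
              · exfalso
                rcases (h4iff w3).mp hadj.symm with h'|h'|h'|h'
                exacts [hw3u h', hw3b1 h', hw3x5 h', hw3s4 h']
              · exfalso
                rcases (h5iff w3).mp hadj.symm with h'|h'|h'|h'
                exacts [hw3u h', hw3A2 h', hw3x4 h', hw3s4 (h'.trans hw45.symm)]
              · exact absurd hadj (fun hh => hh.ne rfl)
              · exact Or.inr rfl
            have hcw := (Finset.card_le_card hsub).trans (cardle2 _ _)
            rw [G.card_neighborFinset_eq_degree w3] at hcw
            have := mindeg w3
            omega

      by_cases h25 : s2 = x5 <;> by_cases h35 : s3 = x5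
      · -- both extra neighbors are x5
        obtain ⟨z, hz⟩ := hbig {u, x4, x5, b1, x2, x3} ((cardle6 _ _ _ _ _ _).trans (by norm_num))
        simp only [Finset.mem_insert, Finset.mem_singleton, not_or] at hz
        obtain ⟨hz1, hz2, hz3, hz4, hz5, hz6⟩ := hz
        refine hsmall {u, x4, x5} (lt_of_le_of_lt (cardle3 _ _ _) (by norm_num))
          (mk_cut G _ {b1, x2, x3} b1 z ?_ ?_ ?_ ?_ ?_)
        · simp
        · simp [hb1u, hb1x4, Ne.symm h5b1]
        · simp [hz1, hz2, hz3]
        · simp [hz4, hz5, hz6]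
        · intro t ht y hadj
          simp only [Set.mem_insert_iff, Set.mem_singleton_iff] at ht
          rcases ht with rfl | rfl | rfl
          · rcases (hiffb1 y).mp hadj with rfl|rfl|rfl|rfl <;> simp
          · rcases (h2iff y).mp hadj with rfl|rfl|rfl|rfl <;> simp [h25]
          · rcases (h3iff y).mp hadj with rfl|rfl|rfl|rfl <;> simp [h35]
      · -- s2 = x5, s3 outside
        have hs3Nu : s3 ∉ G.neighborFinset u := by
          intro hmem3
          rcases hNuEq s3 hmem3 with h|h|h|h|h
          exacts [hs3b1 h, hs3x2 h, hs3x3 h, hs3x4 h, h35 h]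
        exact sub22 x2 x3 s3 h2Nu h3Nu h23 h24 h34 (fun h => h52 h.symm) (fun h => h53 h.symm)
          (Ne.symm hb1x2) (Ne.symm hb1x3) hs3Nu hs3u
          (fun t ht => by rcases hNuEq t ht with h|h|h|h|h <;> tauto)
          hiffb1 (fun y => by rw [h2iff y, h25]) h3iff not24 not34
      · -- s3 = x5, s2 outside
        have hs2Nu : s2 ∉ G.neighborFinset u := by
          intro hmem2
          rcases hNuEq s2 hmem2 with h|h|h|h|h
          exacts [hs2b1 h, hs2x2 h, hs2x3 h, hs2x4 h, h25 h]
        exact sub22 x3 x2 s2 h3Nu h2Nu (Ne.symm h23) h34 h24 (fun h => h53 h.symm)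
          (fun h => h52 h.symm) (Ne.symm hb1x3) (Ne.symm hb1x2) hs2Nu hs2u
          (fun t ht => by rcases hNuEq t ht with h|h|h|h|h <;> tauto)
          (fun y => by rw [hiffb1 y]; tauto) (fun y => by rw [h3iff y, h35]) h2iff not34 not24
      · -- both outside
        have hs2Nu : s2 ∉ G.neighborFinset u := by
          intro hmem2
          rcases hNuEq s2 hmem2 with h|h|h|h|h
          exacts [hs2b1 h, hs2x2 h, hs2x3 h, hs2x4 h, h25 h]
        have hs3Nu : s3 ∉ G.neighborFinset u := by
          intro hmem3
          rcases hNuEq s3 hmem3 with h|h|h|h|h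
          exacts [hs3b1 h, hs3x2 h, hs3x3 h, hs3x4 h, h35 h]
        by_cases hw23 : s2 = s3
        · obtain ⟨z, hz⟩ := hbig {u, x4, s2, b1, x2, x3} ((cardle6 _ _ _ _ _ _).trans (by norm_num))
          simp only [Finset.mem_insert, Finset.mem_singleton, not_or] at hz
          obtain ⟨hz1, hz2, hz3, hz4, hz5, hz6⟩ := hz
          refine hsmall {u, x4, s2} (lt_of_le_of_lt (cardle3 _ _ _) (by norm_num))
            (mk_cut G _ {b1, x2, x3} b1 z ?_ ?_ ?_ ?_ ?_)
          · simp
          · simp [hb1u, hb1x4, Ne.symm hs2b1]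
          · simp [hz1, hz2, hz3]
          · simp [hz4, hz5, hz6]
          · intro t ht y hadj
            simp only [Set.mem_insert_iff, Set.mem_singleton_iff] at ht
            rcases ht with rfl | rfl | rfl
            · rcases (hiffb1 y).mp hadj with rfl|rfl|rfl|rfl <;> simp
            · rcases (h2iff y).mp hadj with rfl|rfl|rfl|rfl <;> simp
            · rcases (h3iff y).mp hadj with rfl|rfl|rfl|rfl <;> simp [hw23]
        · obtain ⟨z, hz⟩ := hbig {u, x3, x4, s2, b1, x2} ((cardle6 _ _ _ _ _ _).trans (by norm_num))
          simp only [Finset.mem_insert, Finset.mem_singleton, not_or] at hz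
          obtain ⟨hz1, hz2, hz3, hz4, hz5, hz6⟩ := hz
          have hcut : IsVertexCut G ({u, x3, x4, s2} : Set V) := by
            refine mk_cut G _ {b1, x2} b1 z ?_ ?_ ?_ ?_ ?_
            · simp
            · simp [hb1u, hb1x3, hb1x4, Ne.symm hs2b1]
            · simp [hz1, hz2, hz3, hz4]
            · simp [hz5, hz6]
            · intro t ht y hadj
              simp only [Set.mem_insert_iff, Set.mem_singleton_iff] at ht
              rcases ht with rfl | rfl
              · rcases (hiffb1 y).mp hadj with rfl|rfl|rfl|rfl <;> simp
              · rcases (h2iff y).mp hadj with rfl|rfl|rfl|rfl <;> simp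
          refine hforest _ hcut (ACY2 G _ ?_)
          intro T hTS hdeg x y z hx hy hz' hxy hxz hyz
          have hmemS : ∀ t, t ∈ T → t = u ∨ t = x3 ∨ t = x4 ∨ t = s2 := by
            intro t ht
            simpa only [Set.mem_insert_iff, Set.mem_singleton_iff] using hTS ht
          have hs2T : s2 ∉ T := by
            intro hT
            obtain ⟨B1, B2, hB1, hB2, hB12, k1, k2⟩ := hdeg s2 hT
            have e : ∀ B, B ∈ T → G.Adj s2 B → B = x4 := by
              intro B hBT hk
              rcases hmemS B hBT with h|h|h|h
              · exfalso; rw [h] at hk; exact hs2Nu ((hNuIff s2).mpr hk.symm)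
              · exfalso; rw [h] at hk
                rcases (h3iff s2).mp hk.symm with h'|h'|h'|h'
                exacts [hs2u h', hs2b1 h', hs2.ne' h', hw23 h']
              · exact h
              · exfalso; rw [h] at hk; exact hk.ne rfl
            exact hB12 ((e B1 hB1 k1).trans (e B2 hB2 k2).symm)
          have hx3T : x3 ∉ T := by
            intro hT
            obtain ⟨B1, B2, hB1, hB2, hB12, k1, k2⟩ := hdeg x3 hT
            have e : ∀ B, B ∈ T → G.Adj x3 B → B = u := by
              intro B hBT hk
              rcases hmemS B hBT with h|h|h|h
              · exact h
              · exfalso; rw [h] at hk; exact hk.ne rfl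
              · exfalso; rw [h] at hk; exact not34 hk
              · exfalso; rw [h] at hk
                rcases (h3iff s2).mp hk with h'|h'|h'|h'
                exacts [hs2u h', hs2b1 h', hs2.ne' h', hw23 h']
            exact hB12 ((e B1 hB1 k1).trans (e B2 hB2 k2).symm)
          have hmem : ∀ t, t ∈ T → t = u ∨ t = x4 := by
            intro t ht
            rcases hmemS t ht with h|h|h|h
            · exact Or.inl h
            · exact absurd (h ▸ ht) hx3T
            · exact Or.inr h
            · exact absurd (h ▸ ht) hs2T
          rcases hmem x hx with h1|h1 <;> rcases hmem y hy with h2|h2 <;> rcases hmem z hz' with h3|h3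
          exacts [hxy (h1.trans h2.symm), hxy (h1.trans h2.symm), hxz (h1.trans h3.symm),
            hyz (h2.trans h3.symm), hyz (h2.trans h3.symm), hxz (h1.trans h3.symm),
            hxy (h1.trans h2.symm), hxy (h1.trans h2.symm)]

    rcases hedge with hxy | hxy | hxy
    · exact main p q r hpNu hqNu hrNu (Ne.symm hqp) (Ne.symm hrp) (Ne.symm hrq) hb1iff hxy
    · exact main p r q hpNu hrNu hqNu (Ne.symm hrp) (Ne.symm hqp) hrq
        (fun t => by rw [hb1iff t]; tauto) hxy
    · exact main q r p hqNu hrNu hpNu (Ne.symm hrq) hqp hrp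
        (fun t => by rw [hb1iff t]; tauto) hxy
  · -- CASE 1 : every neighbor of u has a neighbor outside N[u]
    push_neg at hB
    have hcycNu := hforest _ (hnbhd u (by omega))
    have hex : ∃ (v0 : ↥(↑(G.neighborFinset u) : Set V))
        (c : (G.induce (↑(G.neighborFinset u) : Set V)).Walk v0 v0), c.IsCycle := by
      by_contra h; push_neg at h
      exact hcycNu (fun v c hc => (h v c) hc)
    obtain ⟨v0, c, hc⟩ := hex
    obtain ⟨P0, Q0, hP0s, hQ0s, hPQ0, hA1, hA2'⟩ := cycle_start_nbrs hc
    have haNu : (v0 : V) ∈ G.neighborFinset u := Finset.mem_coe.mp v0.2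
    have hpNu : (P0 : V) ∈ G.neighborFinset u := Finset.mem_coe.mp P0.2
    have hqNu : (Q0 : V) ∈ G.neighborFinset u := Finset.mem_coe.mp Q0.2
    have gp : G.Adj (v0 : V) (P0 : V) := hA1
    have gq : G.Adj (v0 : V) (Q0 : V) := hA2'
    have hpq : (P0 : V) ≠ (Q0 : V) := fun h => hPQ0 (Subtype.ext h)
    set a := (v0 : V) with haDef
    set p := (P0 : V) with hpDef
    set q := (Q0 : V) with hqDef
    obtain ⟨wa, hwa, hwau, hwaNu⟩ := hB a haNu
    have hadjua : G.Adj a u := ((hNuIff a).mp haNu).symm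
    have hau : a ≠ u := neU a haNu
    have hpu : p ≠ u := neU p hpNu
    have hqu : q ≠ u := neU q hqNu
    have hwap : wa ≠ p := fun h => hwaNu (h ▸ hpNu)
    have hwaq : wa ≠ q := fun h => hwaNu (h ▸ hqNu)
    have hwaa : wa ≠ a := hwa.ne'
    have haiff := deg4iff a u p q wa (hdeg4 a haNu) (Ne.symm hpu) (Ne.symm hqu) (Ne.symm hwau)
      hpq (Ne.symm hwap) (Ne.symm hwaq) hadjua gp gq hwa
    obtain ⟨P1, P2, hP1s, hP2s, hP12, k1, k2⟩ := cycle_nbrs hc hP0s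
    obtain ⟨wp, hwp, hwpu, hwpNu⟩ := hB p hpNu
    have bex : ∃ b', b' ∈ G.neighborFinset u ∧ b' ≠ a ∧
        (∀ y, G.Adj p y ↔ (y = u ∨ y = a ∨ y = b' ∨ y = wp)) := by
      have g1 : G.Adj p (P1 : V) := k1
      have g2 : G.Adj p (P2 : V) := k2
      have hP1Nu : (P1 : V) ∈ G.neighborFinset u := Finset.mem_coe.mp P1.2
      have hP2Nu : (P2 : V) ∈ G.neighborFinset u := Finset.mem_coe.mp P2.2
      have h12 : (P1 : V) ≠ (P2 : V) := fun h => hP12 (Subtype.ext h)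
      have hpiff0 := deg4iff p u (P1 : V) (P2 : V) wp (hdeg4 p hpNu)
        (Ne.symm (neU _ hP1Nu)) (Ne.symm (neU _ hP2Nu)) (Ne.symm hwpu)
        h12 (fun h => hwpNu (h ▸ hP1Nu)) (fun h => hwpNu (h ▸ hP2Nu))
        ((hNuIff p).mp hpNu).symm g1 g2 hwp
      rcases (hpiff0 a).mp gp.symm with h|h|h|h
      · exact absurd h hau
      · exact ⟨(P2 : V), hP2Nu, fun hh => h12 (h.symm.trans hh.symm),
          fun y => by rw [hpiff0 y, ← h]⟩
      · exact ⟨(P1 : V), hP1Nu, fun hh => h12 (hh.trans h),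
          fun y => by rw [hpiff0 y, ← h]; tauto⟩
      · exact absurd (h ▸ haNu) hwpNu
    obtain ⟨b', hb'Nu, hb'a, hpiff⟩ := bex
    obtain ⟨Q1, Q2, hQ1s, hQ2s, hQ12, k1', k2'⟩ := cycle_nbrs hc hQ0s
    obtain ⟨wq, hwq, hwqu, hwqNu⟩ := hB q hqNu
    have cex : ∃ c', c' ∈ G.neighborFinset u ∧ c' ≠ a ∧
        (∀ y, G.Adj q y ↔ (y = u ∨ y = a ∨ y = c' ∨ y = wq)) := by
      have g1 : G.Adj q (Q1 : V) := k1'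
      have g2 : G.Adj q (Q2 : V) := k2'
      have hQ1Nu : (Q1 : V) ∈ G.neighborFinset u := Finset.mem_coe.mp Q1.2
      have hQ2Nu : (Q2 : V) ∈ G.neighborFinset u := Finset.mem_coe.mp Q2.2
      have h12 : (Q1 : V) ≠ (Q2 : V) := fun h => hQ12 (Subtype.ext h)
      have hqiff0 := deg4iff q u (Q1 : V) (Q2 : V) wq (hdeg4 q hqNu)
        (Ne.symm (neU _ hQ1Nu)) (Ne.symm (neU _ hQ2Nu)) (Ne.symm hwqu)
        h12 (fun h => hwqNu (h ▸ hQ1Nu)) (fun h => hwqNu (h ▸ hQ2Nu))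
        ((hNuIff q).mp hqNu).symm g1 g2 hwq
      rcases (hqiff0 a).mp gq.symm with h|h|h|h
      · exact absurd h hau
      · exact ⟨(Q2 : V), hQ2Nu, fun hh => h12 (h.symm.trans hh.symm),
          fun y => by rw [hqiff0 y, ← h]⟩
      · exact ⟨(Q1 : V), hQ1Nu, fun hh => h12 (hh.trans h),
          fun y => by rw [hqiff0 y, ← h]; tauto⟩
      · exact absurd (h ▸ haNu) hwqNu
    obtain ⟨c', hc'Nu, hc'a, hqiff⟩ := cex
    have hpb' : G.Adj p b' := (hpiff b').mpr (by tauto)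
    have hqc' : G.Adj q c' := (hqiff c').mpr (by tauto)
    have hb'u : b' ≠ u := neU b' hb'Nu
    have hc'u : c' ≠ u := neU c' hc'Nu
    have hwpa : wp ≠ a := fun h => hwpNu (h ▸ haNu)
    have hwqa : wq ≠ a := fun h => hwqNu (h ▸ haNu)
    by_cases hApq : G.Adj p q
    · -- case 1A : triangle a p q, forest cut {u, a, wp, wq}
      have hq_b' : q = b' := by
        rcases (hpiff q).mp hApq with h|h|h|h
        exacts [absurd h hqu, absurd h gq.ne', h, absurd (h ▸ hqNu) hwpNu]
      have hp_c' : p = c' := by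
        rcases (hqiff p).mp hApq.symm with h|h|h|h
        exacts [absurd h hpu, absurd h gp.ne', h, absurd (h ▸ hpNu) hwqNu]
      obtain ⟨z, hzNu, hza, hzp, hzq, -⟩ := exNu a p q q
      have hzu : z ≠ u := neU z hzNu
      have hzwp : z ≠ wp := fun h => hwpNu (h ▸ hzNu)
      have hzwq : z ≠ wq := fun h => hwqNu (h ▸ hzNu)
      have hpwp : p ≠ wp := fun h => hwpNu (h ▸ hpNu)
      have hpwq : p ≠ wq := fun h => hwqNu (h ▸ hpNu)
      have hcut : IsVertexCut G ({u, a, wp, wq} : Set V) := by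
        refine mk_cut G _ {p, q} p z ?_ ?_ ?_ ?_ ?_
        · simp
        · simp [hpu, gp.ne', hpwp, hpwq]
        · simp [hzu, hza, hzwp, hzwq]
        · simp [hzp, hzq]
        · intro t ht y hadj
          simp only [Set.mem_insert_iff, Set.mem_singleton_iff] at ht
          rcases ht with rfl | rfl
          · rcases (hpiff y).mp hadj with rfl|rfl|rfl|rfl <;> simp [← hq_b']
          · rcases (hqiff y).mp hadj with rfl|rfl|rfl|rfl <;> simp [← hp_c']
      refine hforest _ hcut (ACY2 G _ ?_)
      intro T hTS hdeg x y z' hx hy hz' hxy hxz hyz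
      have hmemS : ∀ t, t ∈ T → t = u ∨ t = a ∨ t = wp ∨ t = wq := by
        intro t ht
        simpa only [Set.mem_insert_iff, Set.mem_singleton_iff] using hTS ht
      have huT : u ∉ T := by
        intro hT
        obtain ⟨B1, B2, hB1, hB2, hB12, j1, j2⟩ := hdeg u hT
        have e : ∀ B, B ∈ T → G.Adj u B → B = a := by
          intro B hBT hk
          rcases hmemS B hBT with h|h|h|h
          · exfalso; rw [h] at hk; exact hk.ne rfl
          · exact h
          · exfalso; rw [h] at hk; exact hwpNu ((hNuIff wp).mpr hk)
          · exfalso; rw [h] at hk; exact hwqNu ((hNuIff wq).mpr hk)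
        exact hB12 ((e B1 hB1 j1).trans (e B2 hB2 j2).symm)
      have haT : a ∉ T := by
        intro hT
        obtain ⟨B1, B2, hB1, hB2, hB12, j1, j2⟩ := hdeg a hT
        have e : ∀ B, B ∈ T → G.Adj a B → B = wa := by
          intro B hBT hk
          rcases hmemS B hBT with h|h|h|h
          · exact absurd (h ▸ hBT) huT
          · exfalso; rw [h] at hk; exact hk.ne rfl
          · rw [h] at hk
            rcases (haiff wp).mp hk with h'|h'|h'|h'
            exacts [absurd h' hwpu, absurd (h'.symm ▸ hpNu) hwpNu,
              absurd (h'.symm ▸ hqNu) hwpNu, h.trans h']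
          · rw [h] at hk
            rcases (haiff wq).mp hk with h'|h'|h'|h'
            exacts [absurd h' hwqu, absurd (h'.symm ▸ hpNu) hwqNu,
              absurd (h'.symm ▸ hqNu) hwqNu, h.trans h']
        exact hB12 ((e B1 hB1 j1).trans (e B2 hB2 j2).symm)
      have hmem : ∀ t, t ∈ T → t = wp ∨ t = wq := by
        intro t ht
        rcases hmemS t ht with h|h|h|h
        · exact absurd (h ▸ ht) huT
        · exact absurd (h ▸ ht) haT
        · exact Or.inl h
        · exact Or.inr h
      rcases hmem x hx with h1|h1 <;> rcases hmem y hy with h2|h2 <;> rcases hmem z' hz' with h3|h3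
      exacts [hxy (h1.trans h2.symm), hxy (h1.trans h2.symm), hxz (h1.trans h3.symm),
        hyz (h2.trans h3.symm), hyz (h2.trans h3.symm), hxz (h1.trans h3.symm),
        hxy (h1.trans h2.symm), hxy (h1.trans h2.symm)]
    · -- case 1B
      have hb'q : b' ≠ q := fun h => hApq (h ▸ hpb')
      have hc'nep : c' ≠ p := fun h => hApq ((h ▸ hqc').symm)
      have hpwa : G.Adj p wa := by
        by_contra hnp
        refine hforest _ (hnbhd a (by rw [hdeg4 a haNu]; omega)) (ACY2 G _ ?_)
        intro T hTS hdeg x y z' hx hy hz' hxy hxz hyz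
        have hmemS : ∀ t, t ∈ T → t = u ∨ t = p ∨ t = q ∨ t = wa := by
          intro t ht
          exact (haiff t).mp ((SimpleGraph.mem_neighborFinset G a t).mp (Finset.mem_coe.mp (hTS ht)))
        have hwaT : wa ∉ T := by
          intro hT
          obtain ⟨B1, B2, hB1, hB2, hB12, j1, j2⟩ := hdeg wa hT
          have e : ∀ B, B ∈ T → G.Adj wa B → B = q := by
            intro B hBT hk
            rcases hmemS B hBT with h|h|h|h
            · exfalso; rw [h] at hk; exact hwaNu ((hNuIff wa).mpr hk.symm)
            · exfalso; rw [h] at hk; exact hnp hk.symm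
            · exact h
            · exfalso; rw [h] at hk; exact hk.ne rfl
          exact hB12 ((e B1 hB1 j1).trans (e B2 hB2 j2).symm)
        have hpT : p ∉ T := by
          intro hT
          obtain ⟨B1, B2, hB1, hB2, hB12, j1, j2⟩ := hdeg p hT
          have e : ∀ B, B ∈ T → G.Adj p B → B = u := by
            intro B hBT hk
            rcases hmemS B hBT with h|h|h|h
            · exact h
            · exfalso; rw [h] at hk; exact hk.ne rfl
            · exfalso; rw [h] at hk; exact hApq hk
            · exact absurd (h ▸ hBT) hwaT
          exact hB12 ((e B1 hB1 j1).trans (e B2 hB2 j2).symm)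
        have hmem : ∀ t, t ∈ T → t = u ∨ t = q := by
          intro t ht
          rcases hmemS t ht with h|h|h|h
          · exact Or.inl h
          · exact absurd (h ▸ ht) hpT
          · exact Or.inr h
          · exact absurd (h ▸ ht) hwaT
        rcases hmem x hx with h1|h1 <;> rcases hmem y hy with h2|h2 <;> rcases hmem z' hz' with h3|h3
        exacts [hxy (h1.trans h2.symm), hxy (h1.trans h2.symm), hxz (h1.trans h3.symm),
          hyz (h2.trans h3.symm), hyz (h2.trans h3.symm), hxz (h1.trans h3.symm),
          hxy (h1.trans h2.symm), hxy (h1.trans h2.symm)]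
      have hqwa : G.Adj q wa := by
        by_contra hnq
        refine hforest _ (hnbhd a (by rw [hdeg4 a haNu]; omega)) (ACY2 G _ ?_)
        intro T hTS hdeg x y z' hx hy hz' hxy hxz hyz
        have hmemS : ∀ t, t ∈ T → t = u ∨ t = p ∨ t = q ∨ t = wa := by
          intro t ht
          exact (haiff t).mp ((SimpleGraph.mem_neighborFinset G a t).mp (Finset.mem_coe.mp (hTS ht)))
        have hwaT : wa ∉ T := by
          intro hT
          obtain ⟨B1, B2, hB1, hB2, hB12, j1, j2⟩ := hdeg wa hT
          have e : ∀ B, B ∈ T → G.Adj wa B → B = p := by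
            intro B hBT hk
            rcases hmemS B hBT with h|h|h|h
            · exfalso; rw [h] at hk; exact hwaNu ((hNuIff wa).mpr hk.symm)
            · exact h
            · exfalso; rw [h] at hk; exact hnq hk.symm
            · exfalso; rw [h] at hk; exact hk.ne rfl
          exact hB12 ((e B1 hB1 j1).trans (e B2 hB2 j2).symm)
        have hqT : q ∉ T := by
          intro hT
          obtain ⟨B1, B2, hB1, hB2, hB12, j1, j2⟩ := hdeg q hT
          have e : ∀ B, B ∈ T → G.Adj q B → B = u := by
            intro B hBT hk
            rcases hmemS B hBT with h|h|h|h
            · exact h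
            · exfalso; rw [h] at hk; exact hApq hk.symm
            · exfalso; rw [h] at hk; exact hk.ne rfl
            · exact absurd (h ▸ hBT) hwaT
          exact hB12 ((e B1 hB1 j1).trans (e B2 hB2 j2).symm)
        have hmem : ∀ t, t ∈ T → t = u ∨ t = p := by
          intro t ht
          rcases hmemS t ht with h|h|h|h
          · exact Or.inl h
          · exact Or.inr h
          · exact absurd (h ▸ ht) hqT
          · exact absurd (h ▸ ht) hwaT
        rcases hmem x hx with h1|h1 <;> rcases hmem y hy with h2|h2 <;> rcases hmem z' hz' with h3|h3
        exacts [hxy (h1.trans h2.symm), hxy (h1.trans h2.symm), hxz (h1.trans h3.symm),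
          hyz (h2.trans h3.symm), hyz (h2.trans h3.symm), hxz (h1.trans h3.symm),
          hxy (h1.trans h2.symm), hxy (h1.trans h2.symm)]
      have hwp_wa : wp = wa := by
        rcases (hpiff wa).mp hpwa with h|h|h|h
        exacts [absurd h hwau, absurd h hwaa, absurd (h.symm ▸ hb'Nu) hwaNu, h.symm]
      have hwq_wa : wq = wa := by
        rcases (hqiff wa).mp hqwa with h|h|h|h
        exacts [absurd h hwau, absurd h hwaa, absurd (h.symm ▸ hc'Nu) hwaNu, h.symm]
      have hnab' : ¬ G.Adj a b' := by
        intro h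
        rcases (haiff b').mp h with h'|h'|h'|h'
        exacts [hb'u h', hpb'.ne h'.symm, hb'q h', hwaNu (h' ▸ hb'Nu)]
      have hnac' : ¬ G.Adj a c' := by
        intro h
        rcases (haiff c').mp h with h'|h'|h'|h'
        exacts [hc'u h', hc'nep h', hqc'.ne h'.symm, hwaNu (h' ▸ hc'Nu)]
      have hb'wa : b' ≠ wa := fun h => hwaNu (h ▸ hb'Nu)
      have hc'wa : c' ≠ wa := fun h => hwaNu (h ▸ hc'Nu)
      by_cases hbc : b' = c'
      · -- case 1B-i : common second neighbor, small cut {u, wa, sd}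
        obtain ⟨sd, hsd, hsdu, hsdp, hsdq⟩ := ex4 b' u p q (hdeg4 b' hb'Nu)
        have hsda : sd ≠ a := fun h => hnab' (by rw [← h]; exact hsd.symm)
        obtain ⟨z, hz⟩ := hbig {u, wa, sd, a, p, q, b'} (cardle7 _ _ _ _ _ _ _)
        simp only [Finset.mem_insert, Finset.mem_singleton, not_or] at hz
        obtain ⟨hz1, hz2, hz3, hz4, hz5, hz6, hz7⟩ := hz
        have hdiff := deg4iff b' u p q sd (hdeg4 b' hb'Nu) (Ne.symm hpu) (Ne.symm hqu)
          (Ne.symm hsdu) hpq (Ne.symm hsdp) (Ne.symm hsdq)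
          ((hNuIff b').mp hb'Nu).symm hpb'.symm (by rw [hbc]; exact hqc'.symm) hsd
        refine hsmall {u, wa, sd} (lt_of_le_of_lt (cardle3 _ _ _) (by norm_num))
          (mk_cut G _ {a, p, q, b'} a z ?_ ?_ ?_ ?_ ?_)
        · simp
        · simp [hau, Ne.symm hwaa, Ne.symm hsda]
        · simp [hz1, hz2, hz3]
        · simp [hz4, hz5, hz6, hz7]
        · intro t ht y hadj
          simp only [Set.mem_insert_iff, Set.mem_singleton_iff] at ht
          rcases ht with rfl | rfl | rfl | rfl
          · rcases (haiff y).mp hadj with rfl|rfl|rfl|rfl <;> simp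
          · rcases (hpiff y).mp hadj with rfl|rfl|rfl|rfl <;> simp [hwp_wa]
          · rcases (hqiff y).mp hadj with rfl|rfl|rfl|rfl <;> simp [hwq_wa, ← hbc]
          · rcases (hdiff y).mp hadj with rfl|rfl|rfl|rfl <;> simp
      · -- case 1B-ii
        have hndq : ¬ G.Adj b' q := by
          intro h
          rcases (hqiff b').mp h.symm with h'|h'|h'|h'
          exacts [hb'u h', hb'a h', hbc h', absurd (h' ▸ hb'Nu) hwqNu]
        have hnc'p : ¬ G.Adj c' p := by
          intro h
          rcases (hpiff c').mp h.symm with h'|h'|h'|h'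
          exacts [hc'u h', hc'a h', hbc h'.symm, absurd (h' ▸ hc'Nu) hwpNu]
        have hdwa : G.Adj b' wa := by
          by_contra hnd
          refine hforest _ (hnbhd p (by rw [hdeg4 p hpNu]; omega)) (ACY2 G _ ?_)
          intro T hTS hdeg x y z' hx hy hz' hxy hxz hyz
          have hmemS : ∀ t, t ∈ T → t = u ∨ t = a ∨ t = b' ∨ t = wa := by
            intro t ht
            have h0 := (hpiff t).mp
              ((SimpleGraph.mem_neighborFinset G p t).mp (Finset.mem_coe.mp (hTS ht)))
            rcases h0 with h|h|h|h
            exacts [Or.inl h, Or.inr (Or.inl h), Or.inr (Or.inr (Or.inl h)),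
              Or.inr (Or.inr (Or.inr (h.trans hwp_wa)))]
          have hb'T : b' ∉ T := by
            intro hT
            obtain ⟨B1, B2, hB1, hB2, hB12, j1, j2⟩ := hdeg b' hT
            have e : ∀ B, B ∈ T → G.Adj b' B → B = u := by
              intro B hBT hk
              rcases hmemS B hBT with h|h|h|h
              · exact h
              · exfalso; rw [h] at hk; exact hnab' hk.symm
              · exfalso; rw [h] at hk; exact hk.ne rfl
              · exfalso; rw [h] at hk; exact hnd hk
            exact hB12 ((e B1 hB1 j1).trans (e B2 hB2 j2).symm)
          have hwaT : wa ∉ T := by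
            intro hT
            obtain ⟨B1, B2, hB1, hB2, hB12, j1, j2⟩ := hdeg wa hT
            have e : ∀ B, B ∈ T → G.Adj wa B → B = a := by
              intro B hBT hk
              rcases hmemS B hBT with h|h|h|h
              · exfalso; rw [h] at hk; exact hwaNu ((hNuIff wa).mpr hk.symm)
              · exact h
              · exfalso; rw [h] at hk; exact hnd hk.symm
              · exfalso; rw [h] at hk; exact hk.ne rfl
            exact hB12 ((e B1 hB1 j1).trans (e B2 hB2 j2).symm)
          have hmem : ∀ t, t ∈ T → t = u ∨ t = a := by
            intro t ht
            rcases hmemS t ht with h|h|h|h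
            · exact Or.inl h
            · exact Or.inr h
            · exact absurd (h ▸ ht) hb'T
            · exact absurd (h ▸ ht) hwaT
          rcases hmem x hx with h1|h1 <;> rcases hmem y hy with h2|h2 <;> rcases hmem z' hz' with h3|h3
          exacts [hxy (h1.trans h2.symm), hxy (h1.trans h2.symm), hxz (h1.trans h3.symm),
            hyz (h2.trans h3.symm), hyz (h2.trans h3.symm), hxz (h1.trans h3.symm),
            hxy (h1.trans h2.symm), hxy (h1.trans h2.symm)]
        have hewa : G.Adj c' wa := by
          by_contra hne
          refine hforest _ (hnbhd q (by rw [hdeg4 q hqNu]; omega)) (ACY2 G _ ?_)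
          intro T hTS hdeg x y z' hx hy hz' hxy hxz hyz
          have hmemS : ∀ t, t ∈ T → t = u ∨ t = a ∨ t = c' ∨ t = wa := by
            intro t ht
            have h0 := (hqiff t).mp
              ((SimpleGraph.mem_neighborFinset G q t).mp (Finset.mem_coe.mp (hTS ht)))
            rcases h0 with h|h|h|h
            exacts [Or.inl h, Or.inr (Or.inl h), Or.inr (Or.inr (Or.inl h)),
              Or.inr (Or.inr (Or.inr (h.trans hwq_wa)))]
          have hc'T : c' ∉ T := by
            intro hT
            obtain ⟨B1, B2, hB1, hB2, hB12, j1, j2⟩ := hdeg c' hT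
            have e : ∀ B, B ∈ T → G.Adj c' B → B = u := by
              intro B hBT hk
              rcases hmemS B hBT with h|h|h|h
              · exact h
              · exfalso; rw [h] at hk; exact hnac' hk.symm
              · exfalso; rw [h] at hk; exact hk.ne rfl
              · exfalso; rw [h] at hk; exact hne hk
            exact hB12 ((e B1 hB1 j1).trans (e B2 hB2 j2).symm)
          have hwaT : wa ∉ T := by
            intro hT
            obtain ⟨B1, B2, hB1, hB2, hB12, j1, j2⟩ := hdeg wa hT
            have e : ∀ B, B ∈ T → G.Adj wa B → B = a := by
              intro B hBT hk
              rcases hmemS B hBT with h|h|h|h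
              · exfalso; rw [h] at hk; exact hwaNu ((hNuIff wa).mpr hk.symm)
              · exact h
              · exfalso; rw [h] at hk; exact hne hk.symm
              · exfalso; rw [h] at hk; exact hk.ne rfl
            exact hB12 ((e B1 hB1 j1).trans (e B2 hB2 j2).symm)
          have hmem : ∀ t, t ∈ T → t = u ∨ t = a := by
            intro t ht
            rcases hmemS t ht with h|h|h|h
            · exact Or.inl h
            · exact Or.inr h
            · exact absurd (h ▸ ht) hc'T
            · exact absurd (h ▸ ht) hwaT
          rcases hmem x hx with h1|h1 <;> rcases hmem y hy with h2|h2 <;> rcases hmem z' hz' with h3|h3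
          exacts [hxy (h1.trans h2.symm), hxy (h1.trans h2.symm), hxz (h1.trans h3.symm),
            hyz (h2.trans h3.symm), hyz (h2.trans h3.symm), hxz (h1.trans h3.symm),
            hxy (h1.trans h2.symm), hxy (h1.trans h2.symm)]
        obtain ⟨sd, hsd, hsdu, hsdp, hsdwa⟩ := ex4 b' u p wa (hdeg4 b' hb'Nu)
        have hsda : sd ≠ a := fun h => hnab' (by rw [← h]; exact hsd.symm)
        have hsdq : sd ≠ q := fun h => hndq (by rw [← h]; exact hsd)
        have hsdb' : sd ≠ b' := hsd.ne'
        have hdiff := deg4iff b' u p wa sd (hdeg4 b' hb'Nu) (Ne.symm hpu) (Ne.symm hwau)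
          (Ne.symm hsdu) (Ne.symm hwap) (Ne.symm hsdp) (Ne.symm hsdwa)
          ((hNuIff b').mp hb'Nu).symm hpb'.symm hdwa hsd
        by_cases hsde : sd = c'
        · -- 2-cut {u, wa}
          obtain ⟨z, hz⟩ := hbig {u, wa, a, p, q, b', c'} (cardle7 _ _ _ _ _ _ _)
          simp only [Finset.mem_insert, Finset.mem_singleton, not_or] at hz
          obtain ⟨hz1, hz2, hz3, hz4, hz5, hz6, hz7⟩ := hz
          have heiff := deg4iff c' u q wa b' (hdeg4 c' hc'Nu) (Ne.symm hqu) (Ne.symm hwau)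
            (Ne.symm hb'u) (Ne.symm hwaq) (Ne.symm hb'q) (Ne.symm hb'wa)
            ((hNuIff c').mp hc'Nu).symm hqc'.symm hewa (by rw [← hsde]; exact hsd.symm)
          refine hsmall {u, wa} (lt_of_le_of_lt (cardle2 _ _) (by norm_num))
            (mk_cut G _ {a, p, q, b', c'} a z ?_ ?_ ?_ ?_ ?_)
          · simp
          · simp [hau, Ne.symm hwaa]
          · simp [hz1, hz2]
          · simp [hz3, hz4, hz5, hz6, hz7]
          · intro t ht y hadj
            simp only [Set.mem_insert_iff, Set.mem_singleton_iff] at ht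
            rcases ht with rfl | rfl | rfl | rfl | rfl
            · rcases (haiff y).mp hadj with rfl|rfl|rfl|rfl <;> simp
            · rcases (hpiff y).mp hadj with rfl|rfl|rfl|rfl <;> simp [hwp_wa]
            · rcases (hqiff y).mp hadj with rfl|rfl|rfl|rfl <;> simp [hwq_wa]
            · rcases (hdiff y).mp hadj with rfl|rfl|rfl|rfl <;> simp [hsde]
            · rcases (heiff y).mp hadj with rfl|rfl|rfl|rfl <;> simp
        · -- case 1B-ii-beta
          have hnb'c' : ¬ G.Adj b' c' := by
            intro h
            rcases (hdiff c').mp h with h'|h'|h'|h'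
            exacts [hc'u h', hc'nep h', hc'wa h', hsde h'.symm]
          obtain ⟨se, hse, hseu, hseq, hsewa⟩ := ex4 c' u q wa (hdeg4 c' hc'Nu)
          have hsea : se ≠ a := fun h => hnac' (by rw [← h]; exact hse.symm)
          have hsep : se ≠ p := fun h => hnc'p (by rw [← h]; exact hse)
          have hseb' : se ≠ b' := fun h => hnb'c' (by rw [← h]; exact hse.symm)
          have hsec' : se ≠ c' := hse.ne'
          have heiff := deg4iff c' u q wa se (hdeg4 c' hc'Nu) (Ne.symm hqu) (Ne.symm hwau)
            (Ne.symm hseu) (Ne.symm hwaq) (Ne.symm hseq) (Ne.symm hsewa)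
            ((hNuIff c').mp hc'Nu).symm hqc'.symm hewa hse
          have hNuEq1 : ∀ t, t ∈ G.neighborFinset u →
              t = a ∨ t = p ∨ t = q ∨ t = b' ∨ t = c' := by
            intro t ht
            have hsub : ({a, p, q, b', c'} : Finset V) ⊆ G.neighborFinset u := by
              intro s0 hs0
              simp only [Finset.mem_insert, Finset.mem_singleton] at hs0
              rcases hs0 with rfl|rfl|rfl|rfl|rfl <;> assumption
            have heq : ({a, p, q, b', c'} : Finset V) = G.neighborFinset u :=
              Finset.eq_of_subset_of_card_le hsub
                (by rw [card5eq a p q b' c' gp.ne gq.ne (Ne.symm hb'a) (Ne.symm hc'a) hpq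
                    (Ne.symm hpb'.ne') (Ne.symm hc'nep) (Ne.symm hb'q) hqc'.ne hbc]; omega)
            rw [← heq] at ht
            simpa using ht
          have hsdNu : sd ∉ G.neighborFinset u := by
            intro hmem0
            rcases hNuEq1 sd hmem0 with h|h|h|h|h
            exacts [hsda h, hsdp h, hsdq h, hsdb' h, hsde h]
          have hseNu : se ∉ G.neighborFinset u := by
            intro hmem0
            rcases hNuEq1 se hmem0 with h|h|h|h|h
            exacts [hsea h, hsep h, hseq h, hseb' h, hsec' h]
          by_cases hz8 : ∃ z, z ∉ ({u, a, p, q, b', c', wa, sd} : Finset V)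
          · obtain ⟨z, hz⟩ := hz8
            simp only [Finset.mem_insert, Finset.mem_singleton, not_or] at hz
            obtain ⟨hz1, hz2, hz3, hz4, hz5, hz6, hz7, hz8'⟩ := hz
            have hsese : se = sd := by
              by_contra hne
              have hcut : IsVertexCut G ({u, wa, c', sd} : Set V) := by
                refine mk_cut G _ {a, p, q, b'} a z ?_ ?_ ?_ ?_ ?_
                · simp
                · simp [hau, Ne.symm hwaa, Ne.symm hc'a, Ne.symm hsda]
                · simp [hz1, hz7, hz6, hz8']
                · simp [hz2, hz3, hz4, hz5]
                · intro t ht y hadj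
                  simp only [Set.mem_insert_iff, Set.mem_singleton_iff] at ht
                  rcases ht with rfl | rfl | rfl | rfl
                  · rcases (haiff y).mp hadj with rfl|rfl|rfl|rfl <;> simp
                  · rcases (hpiff y).mp hadj with rfl|rfl|rfl|rfl <;> simp [hwp_wa]
                  · rcases (hqiff y).mp hadj with rfl|rfl|rfl|rfl <;> simp [hwq_wa]
                  · rcases (hdiff y).mp hadj with rfl|rfl|rfl|rfl <;> simp
              refine hforest _ hcut (ACY2 G _ ?_)
              intro T hTS hdeg x y z' hx hy hz' hxy hxz hyz
              have hmemS : ∀ t, t ∈ T → t = u ∨ t = wa ∨ t = c' ∨ t = sd := by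
                intro t ht
                simpa only [Set.mem_insert_iff, Set.mem_singleton_iff] using hTS ht
              have hsdT : sd ∉ T := by
                intro hT
                obtain ⟨B1, B2, hB1, hB2, hB12, j1, j2⟩ := hdeg sd hT
                have e : ∀ B, B ∈ T → G.Adj sd B → B = wa := by
                  intro B hBT hk
                  rcases hmemS B hBT with h|h|h|h
                  · exfalso; rw [h] at hk; exact hsdNu ((hNuIff sd).mpr hk.symm)
                  · exact h
                  · exfalso; rw [h] at hk
                    rcases (heiff sd).mp hk.symm with h'|h'|h'|h'
                    exacts [hsdu h', hsdq h', hsdwa h', hne h'.symm]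
                  · exfalso; rw [h] at hk; exact hk.ne rfl
                exact hB12 ((e B1 hB1 j1).trans (e B2 hB2 j2).symm)
              have huT : u ∉ T := by
                intro hT
                obtain ⟨B1, B2, hB1, hB2, hB12, j1, j2⟩ := hdeg u hT
                have e : ∀ B, B ∈ T → G.Adj u B → B = c' := by
                  intro B hBT hk
                  rcases hmemS B hBT with h|h|h|h
                  · exfalso; rw [h] at hk; exact hk.ne rfl
                  · exfalso; rw [h] at hk; exact hwaNu ((hNuIff wa).mpr hk)
                  · exact h
                  · exfalso; rw [h] at hk; exact hsdNu ((hNuIff sd).mpr hk)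
                exact hB12 ((e B1 hB1 j1).trans (e B2 hB2 j2).symm)
              have hmem : ∀ t, t ∈ T → t = wa ∨ t = c' := by
                intro t ht
                rcases hmemS t ht with h|h|h|h
                · exact absurd (h ▸ ht) huT
                · exact Or.inl h
                · exact Or.inr h
                · exact absurd (h ▸ ht) hsdT
              rcases hmem x hx with h1|h1 <;> rcases hmem y hy with h2|h2 <;> rcases hmem z' hz' with h3|h3
              exacts [hxy (h1.trans h2.symm), hxy (h1.trans h2.symm), hxz (h1.trans h3.symm),
                hyz (h2.trans h3.symm), hyz (h2.trans h3.symm), hxz (h1.trans h3.symm),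
                hxy (h1.trans h2.symm), hxy (h1.trans h2.symm)]
            refine hsmall {u, wa, sd} (lt_of_le_of_lt (cardle3 _ _ _) (by norm_num))
              (mk_cut G _ {a, p, q, b', c'} a z ?_ ?_ ?_ ?_ ?_)
            · simp
            · simp [hau, Ne.symm hwaa, Ne.symm hsda]
            · simp [hz1, hz7, hz8']
            · simp [hz2, hz3, hz4, hz5, hz6]
            · intro t ht y hadj
              simp only [Set.mem_insert_iff, Set.mem_singleton_iff] at ht
              rcases ht with rfl | rfl | rfl | rfl | rfl
              · rcases (haiff y).mp hadj with rfl|rfl|rfl|rfl <;> simp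
              · rcases (hpiff y).mp hadj with rfl|rfl|rfl|rfl <;> simp [hwp_wa]
              · rcases (hqiff y).mp hadj with rfl|rfl|rfl|rfl <;> simp [hwq_wa]
              · rcases (hdiff y).mp hadj with rfl|rfl|rfl|rfl <;> simp
              · rcases (heiff y).mp hadj with rfl|rfl|rfl|rfl <;> simp [hsese]
          · push_neg at hz8
            have hsub : G.neighborFinset sd ⊆ ({b', c', wa} : Finset V) := by
              intro t ht
              have hadj : G.Adj sd t := (SimpleGraph.mem_neighborFinset G sd t).mp ht
              have htF := hz8 t
              simp only [Finset.mem_insert, Finset.mem_singleton] at htF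
              simp only [Finset.mem_insert, Finset.mem_singleton]
              rcases htF with rfl|rfl|rfl|rfl|rfl|rfl|rfl|rfl
              · exact absurd ((hNuIff sd).mpr hadj.symm) hsdNu
              · exfalso; rcases (haiff sd).mp hadj.symm with h'|h'|h'|h'
                exacts [hsdu h', hsdp h', hsdq h', hsdwa h']
              · exfalso; rcases (hpiff sd).mp hadj.symm with h'|h'|h'|h'
                exacts [hsdu h', hsda h', hsdb' h', hsdwa (h'.trans hwp_wa)]
              · exfalso; rcases (hqiff sd).mp hadj.symm with h'|h'|h'|h'
                exacts [hsdu h', hsda h', hsde h', hsdwa (h'.trans hwq_wa)]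
              · exact Or.inl rfl
              · exact Or.inr (Or.inl rfl)
              · exact Or.inr (Or.inr rfl)
              · exact absurd hadj (fun hh => hh.ne rfl)
            have hcw := (Finset.card_le_card hsub).trans (cardle3 _ _ _)
            rw [G.card_neighborFinset_eq_degree sd] at hcw
            have := mindeg sd
            omega
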